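/- Let H be a weighted graph with connected components H_1,…,H_m. Let t = ν(H) + 1 and t_i = ν(H_i) + 1 for i = 1,…,m. Then H is strongly t-saturating if and only if H_i is strongly t_i-saturating for every i = 1,…,m. -/

import Mathlib

open MvPolynomial
open scoped Classical

noncomputable section

/-! ### Weighted graphs and matchings -/

/-- Number of times the vertex `v` appears in the multiset of edges `M`. -/
def edgeCount {α : Type*} (M : Multiset (Sym2 α)) (v : α) : ℕ :=
  Multiset.countP (fun e => v ∈ e) M

/-- A matching of the weighted graph `(G, w)`: a family of edges of `G` (with repetitions
allowed) such that every vertex appears in these edges no more times than its weight.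
Vertices of weight `0` are regarded as not belonging to the weighted graph. -/
def IsWMatching {α : Type*} (G : SimpleGraph α) (w : α → ℕ) (M : Multiset (Sym2 α)) : Prop :=
  (∀ e ∈ M, e ∈ G.edgeSet) ∧ ∀ v, edgeCount M v ≤ w v

/-- The matching number of the weighted graph `(G, w)`. -/
def nu {α : Type*} (G : SimpleGraph α) (w : α → ℕ) : ℕ :=
  sSup {m | ∃ M : Multiset (Sym2 α), IsWMatching G w M ∧ Multiset.card M = m}

/-- `deg_w(i) = Σ_{j ∈ N_w(i)} w j`, the sum of the weights of the neighbours of `i`. -/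
def wdeg {α : Type*} [Fintype α] (G : SimpleGraph α) (w : α → ℕ) (i : α) : ℕ :=
  ∑ j : α, if G.Adj i j then w j else 0

/-- The weighted graph obtained from `(G, w)` by deleting the (open) neighbourhood of `i`. -/
def delNbr {α : Type*} (G : SimpleGraph α) (w : α → ℕ) (i : α) : α → ℕ :=
  fun j => if G.Adj i j then 0 else w j

/-- The weighted graph obtained from `(G, w)` by deleting the vertices of `N`. -/
def delSet {α : Type*} (w : α → ℕ) (N : Set α) : α → ℕ :=
  fun j => if j ∈ N then 0 else w j

/-- A weighted graph `H = (G, w)` is `t`-saturating if `ν(H) < t` and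
`ν(H − N_H(i)) ≥ t − deg_H(i)` for every vertex `i` of `H`. -/
def TSaturating {α : Type*} [Fintype α] (G : SimpleGraph α) (w : α → ℕ) (t : ℕ) : Prop :=
  nu G w < t ∧ ∀ i, 0 < w i → t ≤ nu G (delNbr G w i) + wdeg G w i

/-- A weighted graph `H = (G, w)` is strongly `t`-saturating if `ν(H) < t` and
`ν(H − j) ≥ t − w j` for every vertex `j` of `H`. -/
def StronglyTSaturating {α : Type*} (G : SimpleGraph α) (w : α → ℕ) (t : ℕ) : Prop :=
  nu G w < t ∧ ∀ j, 0 < w j → t ≤ nu G (delSet w {j}) + w j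

/-! ### Covers, cores, neighbourhoods -/

/-- A (vertex) cover of a graph. -/
def IsVCover {α : Type*} (G : SimpleGraph α) (F : Set α) : Prop :=
  ∀ ⦃i j⦄, G.Adj i j → i ∈ F ∨ j ∈ F

/-- A minimal (vertex) cover of a graph. -/
def IsMinimalVCover {α : Type*} (G : SimpleGraph α) (F : Set α) : Prop :=
  IsVCover G F ∧ ∀ F', IsVCover G F' → F' ⊆ F → F' = F

/-- `core(F)`: the set of vertices of `F` which are not adjacent to any vertex outside `F`. -/
def graphCore {α : Type*} (G : SimpleGraph α) (F : Set α) : Set α :=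
  {i | i ∈ F ∧ ∀ j, G.Adj i j → j ∈ F}

/-- The closed neighbourhood `N[U]` of a set of vertices `U`. -/
def closedNbhd {α : Type*} (G : SimpleGraph α) (U : Set α) : Set α :=
  U ∪ {v | ∃ u ∈ U, G.Adj u v}

/-- `F` is minimal among the covers of `G` containing `S`. -/
def MinimalCoverOver {α : Type*} (G : SimpleGraph α) (S F : Set α) : Prop :=
  IsVCover G F ∧ S ⊆ F ∧ ∀ F', IsVCover G F' → S ⊆ F' → F' ⊆ F → F' = F

/-- `W` is a dominating set: every vertex outside `W` is adjacent to a vertex of `W`. -/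
def IsDominating {α : Type*} (G : SimpleGraph α) (W : Set α) : Prop :=
  ∀ v, v ∉ W → ∃ u ∈ W, G.Adj u v

/-- Every connected component of `H` contains an odd cycle of length at most `L`. -/
def ComponentOddCycleLe {β : Type*} (H : SimpleGraph β) (L : ℕ) : Prop :=
  ∀ c : H.ConnectedComponent, ∃ (v : β) (cyc : H.Walk v v),
    H.connectedComponentMk v = c ∧ cyc.IsCycle ∧ Odd cyc.length ∧ cyc.length ≤ L

/-- Every connected component of `H` contains an odd cycle. -/
def ComponentOddCycle {β : Type*} (H : SimpleGraph β) : Prop :=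
  ∀ c : H.ConnectedComponent, ∃ (v : β) (cyc : H.Walk v v),
    H.connectedComponentMk v = c ∧ cyc.IsCycle ∧ Odd cyc.length

/-! ### Edge ideals -/

/-- The edge ideal of a simple graph. -/
def edgeIdeal (k : Type*) [CommRing k] {σ : Type*} (G : SimpleGraph σ) :
    Ideal (MvPolynomial σ k) :=
  Ideal.span {p | ∃ i j, G.Adj i j ∧ p = X i * X j}

/-- The maximal homogeneous ideal `(x_1, …, x_n)`. -/
def maxIdeal (k : Type*) [CommRing k] (σ : Type*) : Ideal (MvPolynomial σ k) :=
  Ideal.span (Set.range (X : σ → MvPolynomial σ k))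

/-- `P_F`, the ideal generated by the variables `x_i`, `i ∈ F`. -/
def varIdeal (k : Type*) [CommRing k] {σ : Type*} (F : Set σ) : Ideal (MvPolynomial σ k) :=
  Ideal.span ((fun i => (X i : MvPolynomial σ k)) '' F)

/-- The monomial `x^a`. -/
def monom (k : Type*) [CommRing k] {n : ℕ} (a : Fin n → ℕ) : MvPolynomial (Fin n) k :=
  ∏ i : Fin n, (X i : MvPolynomial (Fin n) k) ^ a i

/-- `f` belongs to the saturation `J̃ = ⋃_{m ≥ 1} (J : 𝔪^m)` of `J`. -/
def inSaturation (k : Type*) [CommRing k] {σ : Type*} (J : Ideal (MvPolynomial σ k))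
    (f : MvPolynomial σ k) : Prop :=
  ∃ m : ℕ, f ∈ Submodule.colon J (((maxIdeal k σ) ^ m : Ideal (MvPolynomial σ k)) : Set (MvPolynomial σ k))

/-- `P` is an associated prime of the ideal `J`, i.e. of the module `R ⧸ J`. -/
def assocPrime {R : Type*} [CommRing R] (J P : Ideal R) : Prop :=
  P ∈ associatedPrimes R (R ⧸ J)

/-- `P` is an embedded associated prime of `J`: an associated prime of `R ⧸ J` which is
not a minimal prime of `J`. -/
def embeddedAssocPrime {R : Type*} [CommRing R] (J P : Ideal R) : Prop :=
  assocPrime J P ∧ P ∉ J.minimalPrimes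

/-- The five configurations appearing in the description of `Ass(I³)`: a triangle; a union
of an edge and a triangle meeting at exactly one vertex; a union of two vertex-disjoint
triangles with no edges between them; a union of two triangles meeting at exactly one
vertex; a pentagon. `W` is the vertex set of the subgraph. -/
def Config3 {α : Type*} (G : SimpleGraph α) (W : Set α) : Prop :=
  (∃ u v w : α, u ≠ v ∧ u ≠ w ∧ v ≠ w ∧ G.Adj u v ∧ G.Adj v w ∧ G.Adj u w ∧
    W = {u, v, w}) ∨
  (∃ i j h v : α, [i, j, h, v].Pairwise (· ≠ ·) ∧ G.Adj i j ∧ G.Adj j h ∧ G.Adj i h ∧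
    G.Adj i v ∧ W = {i, j, h, v}) ∨
  (∃ u₁ v₁ w₁ u₂ v₂ w₂ : α, [u₁, v₁, w₁, u₂, v₂, w₂].Pairwise (· ≠ ·) ∧
    G.Adj u₁ v₁ ∧ G.Adj v₁ w₁ ∧ G.Adj u₁ w₁ ∧ G.Adj u₂ v₂ ∧ G.Adj v₂ w₂ ∧ G.Adj u₂ w₂ ∧
    (∀ x ∈ ({u₁, v₁, w₁} : Set α), ∀ y ∈ ({u₂, v₂, w₂} : Set α), ¬ G.Adj x y) ∧
    W = {u₁, v₁, w₁, u₂, v₂, w₂}) ∨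
  (∃ i j h u v : α, [i, j, h, u, v].Pairwise (· ≠ ·) ∧
    G.Adj i j ∧ G.Adj j h ∧ G.Adj i h ∧ G.Adj i u ∧ G.Adj u v ∧ G.Adj i v ∧
    W = {i, j, h, u, v}) ∨
  (∃ p : Fin 5 → α, Function.Injective p ∧ (∀ i : Fin 5, G.Adj (p i) (p (i + 1))) ∧
    W = Set.range p)

end

section Aux

open scoped Classical

lemma card_le_sum_edgeCount {α : Type*} [Fintype α] (M : Multiset (Sym2 α)) :
    Multiset.card M ≤ ∑ v : α, edgeCount M v := by
  induction M using Multiset.induction with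
  | empty => simp [edgeCount]
  | cons e M ih =>
    obtain ⟨a, ha⟩ : ∃ a : α, a ∈ e := by
      induction e using Sym2.ind with
      | _ a b => exact ⟨a, by simp⟩
    have hv : ∀ v : α, edgeCount (e ::ₘ M) v = edgeCount M v + (if v ∈ e then 1 else 0) := by
      intro v
      simp [edgeCount, Multiset.countP_cons, Nat.add_comm]
    have h1 : 1 ≤ ∑ v : α, (if v ∈ e then 1 else 0) := by
      have := Finset.single_le_sum (f := fun v : α => if v ∈ e then (1:ℕ) else 0)
        (fun i _ => Nat.zero_le _) (Finset.mem_univ a)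
      simpa [ha] using this
    simp only [hv, Finset.sum_add_distrib, Multiset.card_cons]
    omega

lemma matchSet_nonempty {α : Type*} (G : SimpleGraph α) (w : α → ℕ) :
    {m | ∃ M : Multiset (Sym2 α), IsWMatching G w M ∧ Multiset.card M = m}.Nonempty :=
  ⟨0, 0, ⟨by simp, fun v => by simp [edgeCount]⟩, rfl⟩

lemma matchSet_bdd {α : Type*} [Fintype α] (G : SimpleGraph α) (w : α → ℕ) :
    BddAbove {m | ∃ M : Multiset (Sym2 α), IsWMatching G w M ∧ Multiset.card M = m} := by
  refine ⟨∑ v : α, w v, ?_⟩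
  rintro m ⟨M, ⟨hE, hC⟩, rfl⟩
  exact le_trans (card_le_sum_edgeCount M) (Finset.sum_le_sum fun v _ => hC v)

lemma le_nu {α : Type*} [Fintype α] {G : SimpleGraph α} {w : α → ℕ} {M : Multiset (Sym2 α)}
    (h : IsWMatching G w M) : Multiset.card M ≤ nu G w :=
  le_csSup (matchSet_bdd G w) ⟨M, h, rfl⟩

lemma exists_nu {α : Type*} [Fintype α] (G : SimpleGraph α) (w : α → ℕ) :
    ∃ M : Multiset (Sym2 α), IsWMatching G w M ∧ Multiset.card M = nu G w :=
  Nat.sSup_mem (matchSet_nonempty G w) (matchSet_bdd G w)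

/-- If no edge crosses `S`, the matching number splits. -/
lemma nu_split {α : Type*} [Fintype α] (G : SimpleGraph α) (w : α → ℕ) (S : Set α)
    (hS : ∀ a b, G.Adj a b → (a ∈ S ↔ b ∈ S)) :
    nu G w = nu G (fun v => if v ∈ S then w v else 0)
      + nu G (fun v => if v ∈ S then 0 else w v) := by
  apply le_antisymm
  · obtain ⟨M, ⟨hE, hC⟩, hcard⟩ := exists_nu G w
    set p : Sym2 α → Prop := fun e => ∀ v ∈ e, v ∈ S with hp
    set M1 := M.filter p with hM1
    set M2 := M.filter (fun e => ¬ p e) with hM2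
    have hsplit : M1 + M2 = M := Multiset.filter_add_not p M
    have hcard' : Multiset.card M1 + Multiset.card M2 = Multiset.card M := by
      rw [← Multiset.card_add, hsplit]
    have h1 : IsWMatching G (fun v => if v ∈ S then w v else 0) M1 := by
      constructor
      · intro e he; exact hE e (Multiset.mem_of_mem_filter he)
      · intro v
        by_cases hv : v ∈ S
        · simp only [hv, if_pos]
          exact le_trans (Multiset.countP_le_of_le _ (Multiset.filter_le _ _)) (hC v)
        · simp only [hv, if_neg, not_false_iff]
          have : edgeCount M1 v = 0 := by
            rw [edgeCount, Multiset.countP_eq_zero]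
            intro e he hve
            exact hv ((Multiset.of_mem_filter he) v hve)
          omega
    have h2 : IsWMatching G (fun v => if v ∈ S then 0 else w v) M2 := by
      constructor
      · intro e he; exact hE e (Multiset.mem_of_mem_filter he)
      · intro v
        by_cases hv : v ∈ S
        · simp only [hv, if_pos]
          have : edgeCount M2 v = 0 := by
            rw [edgeCount, Multiset.countP_eq_zero]
            intro e he hve
            have heM : e ∈ M := Multiset.mem_of_mem_filter he
            have hnp : ¬ p e := (Multiset.mem_filter.1 he).2
            have heG : e ∈ G.edgeSet := hE e heM
            apply hnp
            induction e using Sym2.ind with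
            | _ a b =>
              have hadj : G.Adj a b := heG
              have hiff := hS a b hadj
              have hva : v = a ∨ v = b := by
                simpa [Sym2.mem_iff] using hve
              intro x hx
              have hxa : x = a ∨ x = b := by
                simpa [Sym2.mem_iff] using hx
              rcases hva with rfl | rfl <;> rcases hxa with rfl | rfl <;> tauto
          omega
        · simp only [hv, if_neg, not_false_iff]
          exact le_trans (Multiset.countP_le_of_le _ (Multiset.filter_le _ _)) (hC v)
    calc nu G w = Multiset.card M1 + Multiset.card M2 := by omega
      _ ≤ _ := Nat.add_le_add (le_nu h1) (le_nu h2)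
  · obtain ⟨M1, ⟨hE1, hC1⟩, hc1⟩ := exists_nu G (fun v => if v ∈ S then w v else 0)
    obtain ⟨M2, ⟨hE2, hC2⟩, hc2⟩ := exists_nu G (fun v => if v ∈ S then 0 else w v)
    have h : IsWMatching G w (M1 + M2) := by
      constructor
      · intro e he
        rcases Multiset.mem_add.1 he with h | h
        · exact hE1 e h
        · exact hE2 e h
      · intro v
        have : edgeCount (M1 + M2) v = edgeCount M1 v + edgeCount M2 v :=
          Multiset.countP_add _ _ _
        have h1 := hC1 v
        have h2 := hC2 v
        by_cases hv : v ∈ S <;> simp [hv] at h1 h2 <;> omega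
    have := le_nu h
    rw [Multiset.card_add] at this
    omega

end Aux

theorem stmt10 {α : Type*} [Fintype α] (G : SimpleGraph α) (w : α → ℕ)
    (hw : ∀ i, 0 < w i) :
    StronglyTSaturating G w (nu G w + 1) ↔
      ∀ c : G.ConnectedComponent,
        StronglyTSaturating G (fun v => if G.connectedComponentMk v = c then w v else 0)
          (nu G (fun v => if G.connectedComponentMk v = c then w v else 0) + 1) := by
  classical
  -- Notation: for a component `c`, `S c` is its vertex set.
  have hS : ∀ c : G.ConnectedComponent, ∀ a b, G.Adj a b →
      (a ∈ {v | G.connectedComponentMk v = c} ↔ b ∈ {v | G.connectedComponentMk v = c}) := by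
    intro c a b hab
    have : G.connectedComponentMk a = G.connectedComponentMk b :=
      SimpleGraph.ConnectedComponent.sound hab.reachable
    simp only [Set.mem_setOf_eq, this]
  -- A: nu splits for w
  have hA : ∀ c : G.ConnectedComponent,
      nu G w = nu G (fun v => if G.connectedComponentMk v = c then w v else 0)
        + nu G (fun v => if G.connectedComponentMk v = c then 0 else w v) := by
    intro c
    simpa using nu_split G w {v | G.connectedComponentMk v = c} (hS c)
  -- B: nu splits for delSet w {j}, j in component c
  have hB : ∀ (c : G.ConnectedComponent) (j : α), G.connectedComponentMk j = c →
      nu G (delSet w {j})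
        = nu G (delSet (fun v => if G.connectedComponentMk v = c then w v else 0) {j})
          + nu G (fun v => if G.connectedComponentMk v = c then 0 else w v) := by
    intro c j hjc
    have h := nu_split G (delSet w {j}) {v | G.connectedComponentMk v = c} (hS c)
    have e1 : (fun v => if v ∈ {v | G.connectedComponentMk v = c} then delSet w {j} v else 0)
        = delSet (fun v => if G.connectedComponentMk v = c then w v else 0) {j} := by
      funext v
      by_cases hv : G.connectedComponentMk v = c <;> by_cases hvj : v ∈ ({j} : Set α) <;>
        simp_all [delSet]
    have e2 : (fun v => if v ∈ {v | G.connectedComponentMk v = c} then 0 else delSet w {j} v)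
        = fun v => if G.connectedComponentMk v = c then 0 else w v := by
      funext v
      by_cases hv : G.connectedComponentMk v = c
      · simp [hv]
      · have hvj : v ∉ ({j} : Set α) := by
          simp only [Set.mem_singleton_iff]
          rintro rfl; exact hv hjc
        simp [hv, delSet, hvj]
    rw [e1, e2] at h
    exact h
  constructor
  · rintro ⟨-, hsat⟩ c
    refine ⟨Nat.lt_succ_self _, ?_⟩
    intro j hj
    have hjc : G.connectedComponentMk j = c := by
      by_contra h; simp [h] at hj
    have hwj : 0 < w j := by simpa [hjc] using hj
    have h := hsat j hwj
    have hA' := hA c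
    have hB' := hB c j hjc
    simp only [hjc, if_pos] at *
    omega
  · intro h
    refine ⟨Nat.lt_succ_self _, ?_⟩
    intro j hwj
    set c := G.connectedComponentMk j with hc
    have hcomp := (h c).2 j (by simp [hc.symm, hwj])
    have hA' := hA c
    have hB' := hB c j rfl
    simp only [hc.symm, if_pos] at hcomp ⊢
    omega
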